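/- For the simplex multi-index set I = {𝐢 ∈ ℕ_{≥1}^N : Σ_n i_n ≤ w + N}, the combination coefficient c_𝐢 = Σ_{𝐣 ∈ {0,1}^N, 𝐢+𝐣 ∈ I} (-1)^{|𝐣|} is given by the classical formula c_𝐢 = (-1)^{w+N-|𝐢|} · C(N-1, w+N-|𝐢|) whenever w+1 ≤ |𝐢| ≤ w+N, and c_𝐢 = 0 for |𝐢| ≤ w. -/
import Mathlib


/-- Membership in the simplex multi-index set
`I = {𝐢 ∈ (ℕ_{≥1})^N : ∑_n i_n ≤ w + N}`. -/
def inSimplexSet {N : ℕ} (w : ℕ) (i : Fin N → ℕ) : Prop :=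
  (∀ n, 1 ≤ i n) ∧ ∑ n, i n ≤ w + N

open Classical in
/-- The combination technique coefficient for the simplex set,
`c_𝐢 = ∑_{𝐣 ∈ {0,1}^N, 𝐢+𝐣 ∈ I} (-1)^{|𝐣|}`. -/
noncomputable def simplexCombCoeff {N : ℕ} (w : ℕ) (i : Fin N → ℕ) : ℤ :=
  ∑ b : Fin N → Bool,
    if inSimplexSet w (fun n => i n + (if b n then 1 else 0)) then
      (-1 : ℤ) ^ (Finset.univ.filter (fun n => b n = true)).card
    else 0

/-- Equivalence between boolean vectors and finsets. -/
def boolFunEquivFinset (N : ℕ) : (Fin N → Bool) ≃ Finset (Fin N) where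
  toFun b := Finset.univ.filter (fun n => b n = true)
  invFun t := fun n => decide (n ∈ t)
  left_inv b := by funext n; by_cases h : b n <;> simp [h]
  right_inv t := by ext n; simp

/-- Partial alternating sums of binomial coefficients. -/
lemma alt_partial_sum (n m : ℕ) :
    ∑ k ∈ Finset.range (m + 1), (-1 : ℤ) ^ k * (n + 1).choose k
      = (-1 : ℤ) ^ m * n.choose m := by
  induction m with
  | zero => simp
  | succ m ih =>
    rw [Finset.sum_range_succ, ih, Nat.choose_succ_succ]
    push_cast
    ring

/-- The coefficient as a sum over sizes. -/
lemma simplexCombCoeff_eq {N : ℕ} (w : ℕ) (i : Fin N → ℕ) (hi : ∀ n, 1 ≤ i n) :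
    simplexCombCoeff w i
      = ∑ k ∈ Finset.range (N + 1),
          (N.choose k : ℤ) *
            (if (∑ n, i n) + k ≤ w + N then (-1 : ℤ) ^ k else 0) := by
  classical
  have key : ∀ b : Fin N → Bool,
      (if inSimplexSet w (fun n => i n + (if b n then 1 else 0)) then
        (-1 : ℤ) ^ (Finset.univ.filter (fun n => b n = true)).card else 0)
      = (if (∑ n, i n) + (Finset.univ.filter (fun n => b n = true)).card ≤ w + N
          then (-1 : ℤ) ^ (Finset.univ.filter (fun n => b n = true)).card else 0) := by
    intro b
    have hsum : ∑ n, (i n + (if b n then 1 else 0))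
        = (∑ n, i n) + (Finset.univ.filter (fun n => b n = true)).card := by
      rw [Finset.sum_add_distrib]
      congr 1
      simp [Finset.sum_ite_eq, Finset.sum_boole]
    have : inSimplexSet w (fun n => i n + (if b n then 1 else 0))
        ↔ (∑ n, i n) + (Finset.univ.filter (fun n => b n = true)).card ≤ w + N := by
      unfold inSimplexSet
      constructor
      · rintro ⟨-, h⟩; rwa [hsum] at h
      · intro h
        refine ⟨fun n => le_trans (hi n) (Nat.le_add_right _ _), ?_⟩
        rwa [hsum]
    simp [this]
  unfold simplexCombCoeff
  rw [Finset.sum_congr rfl (fun b _ => key b)]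
  -- transfer to sum over finsets
  have htrans : (∑ b : Fin N → Bool,
      (if (∑ n, i n) + (Finset.univ.filter (fun n => b n = true)).card ≤ w + N
        then (-1 : ℤ) ^ (Finset.univ.filter (fun n => b n = true)).card else 0))
      = ∑ t : Finset (Fin N),
          (if (∑ n, i n) + t.card ≤ w + N then (-1 : ℤ) ^ t.card else 0) :=
    Equiv.sum_comp (boolFunEquivFinset N)
      (fun t => if (∑ n, i n) + t.card ≤ w + N then (-1 : ℤ) ^ t.card else 0)
  rw [htrans, ← Finset.powerset_univ, Finset.sum_powerset, Finset.card_univ,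
    Fintype.card_fin]
  refine Finset.sum_congr rfl fun k _ => ?_
  have := Finset.sum_powersetCard k (Finset.univ : Finset (Fin N))
    (fun c => (if (∑ n, i n) + c ≤ w + N then (-1 : ℤ) ^ c else 0))
  rw [show (∑ t ∈ Finset.powersetCard k Finset.univ,
      (if (∑ n, i n) + t.card ≤ w + N then (-1 : ℤ) ^ t.card else 0)) =
      ∑ t ∈ Finset.powersetCard k Finset.univ,
      (fun c => (if (∑ n, i n) + c ≤ w + N then (-1 : ℤ) ^ c else 0)) t.card from rfl,
    this]
  simp [Finset.card_univ, mul_comm]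

/-- for the simplex multi-index set `I = {𝐢 ∈ ℕ_{≥1}^N : ∑ i_n ≤ w+N}`,
the combination coefficient is `(-1)^{w+N-|𝐢|} C(N-1, w+N-|𝐢|)` whenever
`w+1 ≤ |𝐢| ≤ w+N`, and `0` for `|𝐢| ≤ w`. -/
theorem simplexCombCoeff_formula {N : ℕ} (hN : 1 ≤ N) (w : ℕ) (i : Fin N → ℕ)
    (hi : ∀ n, 1 ≤ i n) :
    ((w + 1 ≤ ∑ n, i n ∧ ∑ n, i n ≤ w + N) →
      simplexCombCoeff w i =
        (-1 : ℤ) ^ (w + N - ∑ n, i n) * (N - 1).choose (w + N - ∑ n, i n)) ∧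
    ((∑ n, i n ≤ w) → simplexCombCoeff w i = 0) := by
  have heq := simplexCombCoeff_eq w i hi
  set s := ∑ n, i n with hs
  have hN1 : N - 1 + 1 = N := by omega
  constructor
  · rintro ⟨h1, h2⟩
    rw [heq]
    have hNm : (w + N - s) + 1 ≤ N + 1 := by omega
    have h0 : ∀ k ∈ Finset.range (N + 1), k ∉ Finset.range (w + N - s + 1) →
        (N.choose k : ℤ) * (if s + k ≤ w + N then (-1 : ℤ) ^ k else 0) = 0 := by
      intro k _ hk
      simp only [Finset.mem_range] at hk
      have : ¬ (s + k ≤ w + N) := by omega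
      simp [this]
    rw [← Finset.sum_subset (Finset.range_subset_range.2 hNm) h0]
    have h1' : ∀ k ∈ Finset.range (w + N - s + 1),
        (N.choose k : ℤ) * (if s + k ≤ w + N then (-1 : ℤ) ^ k else 0)
          = (-1 : ℤ) ^ k * ((N - 1) + 1).choose k := by
      intro k hk
      simp only [Finset.mem_range] at hk
      have hc : s + k ≤ w + N := by omega
      rw [hN1]
      simp [hc, mul_comm]
    rw [Finset.sum_congr rfl h1', alt_partial_sum]
  · intro hle
    rw [heq]
    have h1' : ∀ k ∈ Finset.range (N + 1),
        (N.choose k : ℤ) * (if s + k ≤ w + N then (-1 : ℤ) ^ k else 0)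
          = (-1 : ℤ) ^ k * ((N - 1) + 1).choose k := by
      intro k hk
      simp only [Finset.mem_range] at hk
      have hc : s + k ≤ w + N := by omega
      rw [hN1]
      simp [hc, mul_comm]
    rw [Finset.sum_congr rfl h1']
    have hrange : N + 1 = (N - 1 + 1) + 1 := by omega
    rw [hrange, alt_partial_sum, Nat.choose_eq_zero_of_lt (by omega)]
    simp
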